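/- Let L₁, …, L_K : ℝ^d → ℝ be twice continuously differentiable and let θ ∈ ℝ^d satisfy Σ_{k=1}^K ∇L_k(θ) = 0. For each k, let θ_k* ∈ ℝ^d satisfy ∇L_k(θ_k*) = 0 and θ_k* ≠ θ, and suppose λ_min > 0 where λ_min = min over k of the infimum over ξ on the segment [θ, θ_k*] of ⟨u_k, ∇²L_k(ξ) u_k⟩ with u_k = (θ − θ_k*)/‖θ − θ_k*‖₂. Assume additionally that ∇L_i(θ) ≠ 0 for all i and let G = max_k ‖∇L_k(θ)‖₂. Then (1/K)·Σ_{k=1}^K ‖θ − θ_k*‖₂² ≤ (1/(K·λ_min²))·Σ_{i ≠ j} (−⟨∇L_i(θ), ∇L_j(θ)⟩) ≤ (G²/(K·λ_min²))·Σ_{i ≠ j} (1 − CosSim(∇L_i(θ), ∇L_j(θ))). -/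

import Mathlib

open scoped RealInnerProductSpace

/-- Cosine similarity of two vectors in a real inner product space. -/
noncomputable def cosSim {E : Type*} [NormedAddCommGroup E] [InnerProductSpace ℝ E]
    (x y : E) : ℝ :=
  (inner ℝ x y : ℝ) / (‖x‖ * ‖y‖)

lemma key_grad_lb {d : ℕ} (f : EuclideanSpace ℝ (Fin d) → ℝ) (hf : ContDiff ℝ 2 f)
    (θ a : EuclideanSpace ℝ (Fin d)) (ha : gradient f a = 0) (hne : a ≠ θ)
    (lam : ℝ)
    (hcurv : ∀ ξ ∈ segment ℝ θ a,
      lam ≤ ⟪‖θ - a‖⁻¹ • (θ - a), fderiv ℝ (gradient f) ξ (‖θ - a‖⁻¹ • (θ - a))⟫) :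
    lam * ‖θ - a‖ ≤ ‖gradient f θ‖ := by
  set v := θ - a with hv
  set r := ‖v‖ with hrdef
  have hr : 0 < r := by
    simpa [hrdef, hv, sub_ne_zero] using (sub_ne_zero.mpr (Ne.symm hne))
  set u : EuclideanSpace ℝ (Fin d) := r⁻¹ • v with hu
  have hunorm : ‖u‖ = 1 := by
    rw [hu, norm_smul, norm_inv, norm_norm, ← hrdef, inv_mul_cancel₀ hr.ne']
  have hvu : v = r • u := by
    rw [hu, smul_smul, mul_inv_cancel₀ hr.ne', one_smul]
  -- gradient is differentiable
  have hg : Differentiable ℝ (gradient f) := by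
    have h1 : ContDiff ℝ 1 (fderiv ℝ f) := hf.fderiv_right (le_refl _)
    have : gradient f = fun x =>
        (InnerProductSpace.toDual ℝ (EuclideanSpace ℝ (Fin d))).symm (fderiv ℝ f x) := rfl
    rw [this]
    exact (InnerProductSpace.toDual ℝ
      (EuclideanSpace ℝ (Fin d))).symm.toContinuousLinearEquiv.differentiable.comp
      (h1.differentiable one_ne_zero)
  -- membership of segment
  have hmem : ∀ t ∈ Set.Icc (0:ℝ) 1, a + t • v ∈ segment ℝ θ a := by
    intro t ht
    rw [segment_symm, segment_eq_image']
    exact ⟨t, ht, rfl⟩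
  -- derivative of F
  have hF : ∀ t : ℝ, HasDerivAt (fun s : ℝ => ⟪u, gradient f (a + s • v)⟫)
      ⟪u, fderiv ℝ (gradient f) (a + t • v) v⟫ t := by
    intro t
    have hγ : HasDerivAt (fun s : ℝ => a + s • v) v t := by
      simpa using ((hasDerivAt_id t).smul_const v).const_add a
    have hgd := (hg (a + t • v)).hasFDerivAt
    have hcomp := hgd.comp_hasDerivAt t hγ
    have := (innerSL ℝ u).hasFDerivAt.comp_hasDerivAt t hcomp
    exact this
  have hFd : ∀ t : ℝ, HasDerivAt (fun s : ℝ => ⟪u, gradient f (a + s • v)⟫ - lam * r * s)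
      (⟪u, fderiv ℝ (gradient f) (a + t • v) v⟫ - lam * r) t := by
    intro t
    have h2 : HasDerivAt (fun s : ℝ => lam * r * s) (lam * r) t := by
      simpa using (hasDerivAt_id t).const_mul (lam * r)
    exact (hF t).sub h2
  have hmono : MonotoneOn (fun t : ℝ => ⟪u, gradient f (a + t • v)⟫ - lam * r * t)
      (Set.Icc (0:ℝ) 1) := by
    apply monotoneOn_of_deriv_nonneg (convex_Icc 0 1)
    · exact (Differentiable.continuous (fun t => (hFd t).differentiableAt)).continuousOn
    · exact fun t _ => ((hFd t).differentiableAt).differentiableWithinAt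
    · intro t ht
      rw [(hFd t).deriv]
      have hmem' := hmem t (interior_subset ht)
      have := hcurv _ hmem'
      have hexp : r * ⟪u, fderiv ℝ (gradient f) (a + t • v) u⟫
          = ⟪u, fderiv ℝ (gradient f) (a + t • v) v⟫ := by
        rw [← real_inner_smul_right, ← map_smul, ← hvu]
      rw [← hexp]
      nlinarith [this]
  have h01 := hmono (Set.mem_Icc.mpr ⟨le_refl 0, zero_le_one⟩)
    (Set.mem_Icc.mpr ⟨zero_le_one, le_refl 1⟩) zero_le_one
  simp only [zero_smul, add_zero, one_smul, mul_zero, mul_one, sub_zero, ha,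
    inner_zero_right] at h01
  have hθ : a + v = θ := by rw [hv]; abel
  rw [hθ] at h01
  have hin : ⟪u, gradient f θ⟫ ≤ ‖gradient f θ‖ := by
    calc ⟪u, gradient f θ⟫ ≤ ‖u‖ * ‖gradient f θ‖ := real_inner_le_norm u _
    _ = ‖gradient f θ‖ := by rw [hunorm, one_mul]
  linarith

/-- **Gradient similarity upper bounds closeness.** Let `θ` be a stationary point of the
averaged loss (`∑ k ∇L_k(θ) = 0`), let `θ_k*` be critical points of the individual losses
with `θ_k* ≠ θ`, and suppose the directional curvature of `L_k` along each segment
`[θ, θ_k*]` in the direction `(θ - θ_k*)/‖θ - θ_k*‖` is at least `λ_min > 0`, a lower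
bound attained as the minimum over `k` of the corresponding infima. With
`G = max_k ‖∇L_k(θ)‖` and all `∇L_i(θ) ≠ 0`,
`(1/K) ∑ k ‖θ - θ_k*‖² ≤ (1/(K λ_min²)) ∑_{i≠j} (-⟨∇L_i(θ), ∇L_j(θ)⟩)
  ≤ (G²/(K λ_min²)) ∑_{i≠j} (1 - CosSim(∇L_i(θ), ∇L_j(θ)))`. -/
theorem gradient_similarity_bounds_closeness {d K : ℕ} (hK : 0 < K)
    (L : Fin K → EuclideanSpace ℝ (Fin d) → ℝ)
    (hL : ∀ k, ContDiff ℝ 2 (L k))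
    (θ : EuclideanSpace ℝ (Fin d))
    (hstat : ∑ k, gradient (L k) θ = 0)
    (θs : Fin K → EuclideanSpace ℝ (Fin d))
    (hcrit : ∀ k, gradient (L k) (θs k) = 0)
    (hne : ∀ k, θs k ≠ θ)
    (lamMin : ℝ) (hlam : 0 < lamMin)
    (hcurv : ∀ k, ∀ ξ ∈ segment ℝ θ (θs k),
      lamMin ≤ ⟪‖θ - θs k‖⁻¹ • (θ - θs k),
        fderiv ℝ (gradient (L k)) ξ (‖θ - θs k‖⁻¹ • (θ - θs k))⟫)
    (hgradne : ∀ i, gradient (L i) θ ≠ 0)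
    (G : ℝ)
    (hG : G = (Finset.univ.sup' (Finset.univ_nonempty_iff.mpr
        (Fin.pos_iff_nonempty.mp hK)) fun k => ‖gradient (L k) θ‖)) :
    (K : ℝ)⁻¹ * ∑ k, ‖θ - θs k‖ ^ 2
      ≤ (1 / (K * lamMin ^ 2)) *
          ∑ p ∈ (Finset.univ : Finset (Fin K)).offDiag,
            -(⟪gradient (L p.1) θ, gradient (L p.2) θ⟫)
    ∧ (1 / (K * lamMin ^ 2)) *
          ∑ p ∈ (Finset.univ : Finset (Fin K)).offDiag,
            -(⟪gradient (L p.1) θ, gradient (L p.2) θ⟫)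
      ≤ (G ^ 2 / (K * lamMin ^ 2)) *
          ∑ p ∈ (Finset.univ : Finset (Fin K)).offDiag,
            (1 - cosSim (gradient (L p.1) θ) (gradient (L p.2) θ)) := by
  set g : Fin K → EuclideanSpace ℝ (Fin d) := fun k => gradient (L k) θ with hgdef
  have hKpos : (0:ℝ) < K := Nat.cast_pos.mpr hK
  have hkey : ∀ k, lamMin * ‖θ - θs k‖ ≤ ‖g k‖ := fun k =>
    key_grad_lb (L k) (hL k) θ (θs k) (hcrit k) (hne k) lamMin (hcurv k)
  have hsq : ∀ k, ‖θ - θs k‖ ^ 2 ≤ ‖g k‖ ^ 2 / lamMin ^ 2 := by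
    intro k
    rw [le_div_iff₀ (by positivity)]
    have h2 := mul_self_le_mul_self (mul_nonneg hlam.le (norm_nonneg (θ - θs k))) (hkey k)
    nlinarith [h2]
  -- sum identity
  have hsumid : ∑ k, ‖g k‖ ^ 2
      = ∑ p ∈ (Finset.univ : Finset (Fin K)).offDiag, -(⟪g p.1, g p.2⟫) := by
    have h0 : (0:ℝ) = ∑ i, ∑ j, ⟪g i, g j⟫ := by
      have : (0:ℝ) = ⟪∑ k, g k, ∑ k, g k⟫ := by rw [hstat]; simp
      rw [this, sum_inner]
      exact Finset.sum_congr rfl fun i _ => inner_sum _ _ _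
    have hprod : ∑ i, ∑ j, (⟪g i, g j⟫ : ℝ)
        = ∑ p ∈ (Finset.univ : Finset (Fin K)) ×ˢ Finset.univ, ⟪g p.1, g p.2⟫ := by
      rw [Finset.sum_product]
    have hsplit : ∑ p ∈ (Finset.univ : Finset (Fin K)) ×ˢ Finset.univ, (⟪g p.1, g p.2⟫ : ℝ)
        = ∑ p ∈ (Finset.univ : Finset (Fin K)).diag, ⟪g p.1, g p.2⟫
          + ∑ p ∈ (Finset.univ : Finset (Fin K)).offDiag, ⟪g p.1, g p.2⟫ := by
      rw [← Finset.sum_union (Finset.disjoint_diag_offDiag _), Finset.diag_union_offDiag]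
    have hdiag : ∑ p ∈ (Finset.univ : Finset (Fin K)).diag, (⟪g p.1, g p.2⟫ : ℝ)
        = ∑ k, ‖g k‖ ^ 2 := by
      rw [Finset.sum_diag]
      exact Finset.sum_congr rfl fun k _ => real_inner_self_eq_norm_sq _
    rw [hprod, hsplit, hdiag] at h0
    rw [Finset.sum_neg_distrib]
    linarith
  constructor
  · calc (K : ℝ)⁻¹ * ∑ k, ‖θ - θs k‖ ^ 2
        ≤ (K : ℝ)⁻¹ * ∑ k, ‖g k‖ ^ 2 / lamMin ^ 2 := by
          gcongr with k
          exact hsq k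
      _ = (1 / (K * lamMin ^ 2)) * ∑ k, ‖g k‖ ^ 2 := by
          rw [← Finset.sum_div]
          field_simp
      _ = _ := by rw [hsumid]
  · have hGk : ∀ k, ‖g k‖ ≤ G := by
      intro k
      rw [hG]
      exact Finset.le_sup' (fun k => ‖gradient (L k) θ‖) (Finset.mem_univ k)
    have hG0 : 0 ≤ G := le_trans (norm_nonneg (g ⟨0, hK⟩)) (hGk _)
    have hterm : ∀ p ∈ (Finset.univ : Finset (Fin K)).offDiag,
        -(⟪g p.1, g p.2⟫ : ℝ) ≤ G ^ 2 * (1 - cosSim (g p.1) (g p.2)) := by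
      intro p _
      set x := g p.1; set y := g p.2
      have hx : x ≠ 0 := hgradne p.1
      have hy : y ≠ 0 := hgradne p.2
      have hP : 0 < ‖x‖ * ‖y‖ := mul_pos (norm_pos_iff.mpr hx) (norm_pos_iff.mpr hy)
      have hinner : (⟪x, y⟫ : ℝ) = cosSim x y * (‖x‖ * ‖y‖) := by
        rw [cosSim, div_mul_cancel₀ _ hP.ne']
      have hc := abs_real_inner_div_norm_mul_norm_le_one x y
      have hc1 : cosSim x y ≤ 1 := by
        have := (abs_le.mp hc).2; rwa [cosSim]
      have hc2 : -1 ≤ cosSim x y := by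
        have := (abs_le.mp hc).1; rwa [cosSim]
      have hPG : ‖x‖ * ‖y‖ ≤ G ^ 2 := by
        calc ‖x‖ * ‖y‖ ≤ G * G :=
          mul_le_mul (hGk p.1) (hGk p.2) (norm_nonneg _) hG0
        _ = G ^ 2 := (sq G).symm
      rw [hinner]
      nlinarith [hP, hPG, hc1, hc2]
    calc (1 / (K * lamMin ^ 2)) * ∑ p ∈ (Finset.univ : Finset (Fin K)).offDiag,
          -(⟪g p.1, g p.2⟫ : ℝ)
        ≤ (1 / (K * lamMin ^ 2)) * ∑ p ∈ (Finset.univ : Finset (Fin K)).offDiag,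
          G ^ 2 * (1 - cosSim (g p.1) (g p.2)) := by
          gcongr with p hp
          exact hterm p hp
      _ = (G ^ 2 / (K * lamMin ^ 2)) * ∑ p ∈ (Finset.univ : Finset (Fin K)).offDiag,
          (1 - cosSim (g p.1) (g p.2)) := by
          rw [← Finset.mul_sum]
          ring
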